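/- Let W be the set of twin and locking links, M a maximum matching in E(L,L) \ W, and U the set of leaves unmatched by M. Let M_F = F(L,L) \ W and N = {bb' ∈ M : each of b, b' is unmatched by M_F}. Let J be the set of links in F not incident to a locked leaf, S the set of stems of T, and X = V \ (L ∪ S). Then (3/2)|F| ≥ (3/2)|M| + |U| + (1/2)|N| + (1/2)·Σ_{x ∈ X} d_J(x). -/

import Mathlib

open scoped Classical

namespace TAP

/-- A rooted tree on vertex set `V`, given by a parent function. -/
structure Tree (V : Type) where
  root : V
  parent : V → V
  parent_root : parent root = root
  reach : ∀ v, ∃ n, parent^[n] v = root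

namespace Tree

variable {V : Type} (t : Tree V)

/-- `t.desc w v` : `v` lies in the rooted subtree `T_w`, i.e. `w` is an ancestor of `v` or `w = v`. -/
def desc (w v : V) : Prop := ∃ n, t.parent^[n] v = w

/-- The depth of a node (its distance to the root). -/
noncomputable def depth (v : V) : ℕ :=
  @Nat.find (fun n => t.parent^[n] v = t.root) (Classical.decPred _) (t.reach v)

/-- `v` is a leaf of the tree: it is not the root and it has no children. -/
def IsLeaf (v : V) : Prop := v ≠ t.root ∧ ∀ u, u ≠ v → t.parent u ≠ v

/-- The tree edge `(w, parent w)` (for `w ≠ root`) lies on the tree path `P(u,v)`. -/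
def onPath (w u v : V) : Prop :=
  (t.desc w u ∧ ¬ t.desc w v) ∨ (t.desc w v ∧ ¬ t.desc w u)

/-- The node `c` lies on the tree path `P(u,v)`. -/
def onPathNode (c u v : V) : Prop :=
  (t.desc c u ∨ t.desc c v) ∧ ∀ w, t.desc w u → t.desc w v → t.desc w c

/-- `u` is the least common ancestor of `a` and `b`. -/
def IsLCA (u a b : V) : Prop :=
  t.desc u a ∧ t.desc u b ∧ ∀ w, t.desc w a → t.desc w b → t.desc w u

end Tree

variable {V : Type} [Fintype V] [DecidableEq V]

/-- The link `e` covers the tree edge `(w, parent w)`. -/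
def covers (t : Tree V) (e : Sym2 V) (w : V) : Prop :=
  ∃ u v, e = s(u, v) ∧ t.onPath w u v

/-- Some link of `F` covers the tree edge `(w, parent w)`. -/
def coveredBy (t : Tree V) (F : Finset (Sym2 V)) (w : V) : Prop :=
  ∃ e ∈ F, covers t e w

/-- `F` covers the tree: every tree edge is covered by some link of `F`
(equivalently, `T ∪ F` is 2-edge-connected). -/
def IsCover (t : Tree V) (F : Finset (Sym2 V)) : Prop :=
  ∀ w, w ≠ t.root → coveredBy t F w

/-- `e'` is a shadow of `e`, i.e. `P(e') ⊆ P(e)`. -/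
def Shadow (t : Tree V) (e' e : Sym2 V) : Prop := ∀ w, covers t e' w → covers t e w

/-- `e'` is a proper shadow of `e`. -/
def ProperShadow (t : Tree V) (e' e : Sym2 V) : Prop :=
  Shadow t e' e ∧ ∃ w, covers t e w ∧ ¬ covers t e' w

/-- The link set `E` is closed under shadows. -/
def ShadowClosed (t : Tree V) (E : Finset (Sym2 V)) : Prop :=
  ∀ e ∈ E, ∀ e' : Sym2 V, ¬ e'.IsDiag → Shadow t e' e → e' ∈ E

/-- `F` is an (inclusion-minimal) shadows-minimal cover: replacing any link of `F` by a
proper shadow of it destroys the covering property. -/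
def ShadowsMinimal (t : Tree V) (F : Finset (Sym2 V)) : Prop :=
  IsCover t F ∧ (∀ e ∈ F, ¬ IsCover t (F.erase e)) ∧
  ∀ e ∈ F, ∀ e' : Sym2 V, ProperShadow t e' e → ¬ IsCover t (insert e' (F.erase e))

/-- `deg Y x` : the number of links of `Y` incident to `x`. -/
noncomputable def deg (Y : Finset (Sym2 V)) (x : V) : ℕ := (Y.filter (fun e => x ∈ e)).card

/-! ### Contraction of a set of links -/

/-- `u` and `v` lie in the same 2-edge-connected component of `T ∪ I`,
i.e. they get identified in `T/I`. -/
def rel (t : Tree V) (I : Finset (Sym2 V)) (u v : V) : Prop :=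
  ∀ w, w ≠ t.root → t.onPath w u v → coveredBy t I w

def relSetoid (t : Tree V) (I : Finset (Sym2 V)) : Setoid V where
  r := rel t I
  iseqv := by
    refine ⟨?_, ?_, ?_⟩
    · intro u w _ hp
      rcases hp with ⟨h1, h2⟩ | ⟨h1, h2⟩ <;> exact absurd h1 h2
    · intro u v h w hw hp
      refine h w hw ?_
      rcases hp with ⟨h1, h2⟩ | ⟨h1, h2⟩
      · exact Or.inr ⟨h1, h2⟩
      · exact Or.inl ⟨h1, h2⟩
    · intro u v x h1 h2 w hw hp
      by_cases hv : t.desc w v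
      · rcases hp with ⟨ha, hb⟩ | ⟨ha, hb⟩
        · exact h2 w hw (Or.inl ⟨hv, hb⟩)
        · exact h1 w hw (Or.inr ⟨hv, hb⟩)
      · rcases hp with ⟨ha, hb⟩ | ⟨ha, hb⟩
        · exact h1 w hw (Or.inl ⟨ha, hv⟩)
        · exact h2 w hw (Or.inr ⟨ha, hv⟩)

/-- The node set of the contracted tree `T/I`. -/
abbrev QT (t : Tree V) (I : Finset (Sym2 V)) : Type := Quotient (relSetoid t I)

noncomputable instance instFintypeQT (t : Tree V) (I : Finset (Sym2 V)) : Fintype (QT t I) :=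
  @Quotient.fintype V _ (relSetoid t I) (Classical.decRel _)

/-- The node of `T/I` corresponding to the node `x` of `T`. -/
def qm (t : Tree V) (I : Finset (Sym2 V)) (x : V) : QT t I := Quotient.mk (relSetoid t I) x

/-- The class of `u` is a (possibly compound) leaf of `T/I`. -/
def qleafRep (t : Tree V) (I : Finset (Sym2 V)) (u : V) : Prop :=
  ¬ rel t I u t.root ∧ ∀ v, rel t I (t.parent v) u → rel t I v u

/-- The class of `u` lies in the rooted subtree of `T/I` rooted at the class of `v`. -/
def qdescRep (t : Tree V) (I : Finset (Sym2 V)) (v u : V) : Prop :=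
  ∃ w, t.desc w u ∧ rel t I w v

/-- The class of `u` is a compound node of `T/I` (a contracted component, or the root). -/
def qcompoundRep (t : Tree V) (I : Finset (Sym2 V)) (u : V) : Prop :=
  (∃ w, w ≠ u ∧ rel t I u w) ∨ rel t I u t.root

/-- The node `x` of `T` lies in the rooted subtree of `T/I` whose root is the class `c`. -/
def inT (t : Tree V) (I : Finset (Sym2 V)) (c : QT t I) (x : V) : Prop :=
  qdescRep t I c.out x

/-- The node `d` of `T/I` lies in the rooted subtree of `T/I` whose root is `c`. -/
def below (t : Tree V) (I : Finset (Sym2 V)) (c d : QT t I) : Prop := inT t I c d.out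

/-- The class of `x` is matched by the matching `M`. -/
def matchedRep (t : Tree V) (I M : Finset (Sym2 V)) (x : V) : Prop :=
  ∃ e ∈ M, ∃ z, z ∈ e ∧ rel t I z x

/-- The class of `x` lies on the path of `T/I` between the classes of `u` and of `v`. -/
def qOnPathNode (t : Tree V) (I : Finset (Sym2 V)) (x u v : V) : Prop :=
  (qdescRep t I x u ∨ qdescRep t I x v) ∧
  ∀ w, qdescRep t I w u → qdescRep t I w v → qdescRep t I w x

/-- The class of `x` is the least common ancestor in `T/I` of the classes of `a` and `b`. -/
def qIsLCA (t : Tree V) (I : Finset (Sym2 V)) (x a b : V) : Prop :=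
  qdescRep t I x a ∧ qdescRep t I x b ∧
  ∀ w, qdescRep t I w a → qdescRep t I w b → qdescRep t I w x

/-- Depth of the class of `x` in `T/I`. -/
noncomputable def qdepth (t : Tree V) (I : Finset (Sym2 V)) (x : V) : ℕ :=
  (Finset.univ.filter (fun w => w ≠ t.root ∧ ¬ coveredBy t I w ∧ t.desc w x)).card

/-- `u` is an up-node of (the class of) `a` in `T/I` : among all links of `E` leaving the
class of `a`, some link from the class of `a` to `u` has its other end as close as possible
to the root. -/
def qUpNode (t : Tree V) (I E : Finset (Sym2 V)) (a u : V) : Prop :=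
  (∃ b, rel t I b a ∧ s(b, u) ∈ E) ∧ ¬ rel t I u a ∧
  ∀ b x, rel t I b a → s(b, x) ∈ E → ¬ rel t I x a → qdepth t I u ≤ qdepth t I x

/-- `s(a,b)` is a twin link of `T/I` : a link of `E` between two distinct leaves of `T/I`
whose contraction results in a new leaf. -/
def qTwinAt (t : Tree V) (I E : Finset (Sym2 V)) (a b : V) : Prop :=
  qleafRep t I a ∧ qleafRep t I b ∧ ¬ rel t I a b ∧ s(a, b) ∈ E ∧
  qleafRep t (insert (s(a, b)) I) a

/-- The class of `x` is a stem of `T/I` : the least common ancestor of the two ends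
of a twin link. -/
def qStem (t : Tree V) (I E : Finset (Sym2 V)) (x : V) : Prop :=
  ∃ a b, qTwinAt t I E a b ∧ qIsLCA t I x a b

/-! ### Twin links, stems, up-links and locked leaves in the original tree -/

/-- `a` and `b` are twins: two leaves such that the contraction of the link `ab`
results in a new leaf. -/
def TwinPair (t : Tree V) (a b : V) : Prop :=
  t.IsLeaf a ∧ t.IsLeaf b ∧ a ≠ b ∧ qleafRep t {s(a, b)} a

/-- `e` is a twin link. -/
def IsTwinLinkE (t : Tree V) (e : Sym2 V) : Prop := ∃ a b, e = s(a, b) ∧ TwinPair t a b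

/-- `x` is a stem: the least common ancestor of two twins. -/
def IsStem (t : Tree V) (E : Finset (Sym2 V)) (x : V) : Prop :=
  ∃ a b, TwinPair t a b ∧ s(a, b) ∈ E ∧ t.IsLCA x a b

noncomputable def stems (t : Tree V) (E : Finset (Sym2 V)) : Finset V :=
  Finset.univ.filter (IsStem t E)

/-- `X = V \ (L ∪ S)`. -/
noncomputable def Xset (t : Tree V) (E : Finset (Sym2 V)) : Finset V :=
  Finset.univ.filter (fun x => ¬ t.IsLeaf x ∧ ¬ IsStem t E x)

/-- `s(a,u)` is the up-link of `a` : among all links of `E` at `a`, its other end `u` is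
as close as possible to the root (`u` is the up-node of `a`). -/
def IsUpLink (t : Tree V) (E : Finset (Sym2 V)) (a u : V) : Prop :=
  s(a, u) ∈ E ∧ ∀ x, s(a, x) ∈ E → t.depth u ≤ t.depth x

/-- The rooted subtree `T_v` is `a`-closed: it contains the up-node of `a`. -/
def AClosed (t : Tree V) (E : Finset (Sym2 V)) (v a : V) : Prop :=
  ∀ u, IsUpLink t E a u → t.desc v u

/-- The rooted proper subtree `T_v` witnesses that the leaf `a` is locked by the link `bb'` :
`L(T_v) = {a,b,b'}`, `ab` is a twin link and `T_v` is `a`-closed. -/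
def LocksAt (t : Tree V) (E : Finset (Sym2 V)) (b b' a v : V) : Prop :=
  v ≠ t.root ∧ s(b, b') ∈ E ∧ b ≠ b' ∧ b' ≠ a ∧
  {x | t.IsLeaf x ∧ t.desc v x} = {a, b, b'} ∧
  TwinPair t a b ∧ s(a, b) ∈ E ∧ AClosed t E v a

/-- The leaf `a` is locked by the link `bb'`. -/
def Locks (t : Tree V) (E : Finset (Sym2 V)) (b b' a : V) : Prop :=
  ∃ v, LocksAt t E b b' a v

def IsLockedLeaf (t : Tree V) (E : Finset (Sym2 V)) (a : V) : Prop :=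
  ∃ b b', Locks t E b b' a

def IsLockingLink (t : Tree V) (E : Finset (Sym2 V)) (e : Sym2 V) : Prop :=
  ∃ b b' a, e = s(b, b') ∧ Locks t E b b' a

/-- `T_v` is the locking tree of `a` (with locking link `bb'`): the minimal rooted subtree
witnessing the lock. -/
def IsLockingTree (t : Tree V) (E : Finset (Sym2 V)) (a b b' v : V) : Prop :=
  LocksAt t E b b' a v ∧ ∀ v', LocksAt t E b b' a v' → t.desc v' v

/-! ### The fixed optimal cover `F` -/

noncomputable def twinCount (t : Tree V) (F : Finset (Sym2 V)) : ℕ :=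
  (F.filter (fun e => IsTwinLinkE t e)).card

/-- `F` is an optimal (minimum-size) shadows-minimal cover of `T` with the maximum
number of twin links. -/
def IsGoodCover (t : Tree V) (E F : Finset (Sym2 V)) : Prop :=
  F ⊆ E ∧ ShadowsMinimal t F ∧
  (∀ F' : Finset (Sym2 V), F' ⊆ E → IsCover t F' → F.card ≤ F'.card) ∧
  (∀ F' : Finset (Sym2 V), F' ⊆ E → ShadowsMinimal t F' → F'.card = F.card →
    twinCount t F' ≤ twinCount t F)

/-! ### Matchings and the lower bound -/

def IsMatching (M : Finset (Sym2 V)) : Prop :=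
  (∀ e ∈ M, ¬ e.IsDiag) ∧ ∀ e ∈ M, ∀ f ∈ M, e ≠ f → ∀ x, x ∈ e → x ∉ f

/-- `E(L,L)` : the links of `E` joining two leaves. -/
noncomputable def leafLinks (t : Tree V) (E : Finset (Sym2 V)) : Finset (Sym2 V) :=
  E.filter (fun e => ∀ x ∈ e, t.IsLeaf x)

/-- `W` : the set of twin links and locking links. -/
noncomputable def Wlinks (t : Tree V) (E : Finset (Sym2 V)) : Finset (Sym2 V) :=
  E.filter (fun e => IsTwinLinkE t e ∨ IsLockingLink t E e)

/-- `M` is a maximum matching in `E(L,L) \ W`. -/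
def IsMaxLeafMatching (t : Tree V) (E M : Finset (Sym2 V)) : Prop :=
  M ⊆ leafLinks t E \ Wlinks t E ∧ IsMatching M ∧
  ∀ M' : Finset (Sym2 V), M' ⊆ leafLinks t E \ Wlinks t E → IsMatching M' → M'.card ≤ M.card

/-- `U` : the set of leaves unmatched by `M`. -/
noncomputable def unmatchedLeaves (t : Tree V) (M : Finset (Sym2 V)) : Finset V :=
  Finset.univ.filter (fun a => t.IsLeaf a ∧ ∀ e ∈ M, a ∉ e)

/-- `M_F = F(L,L) \ W`. -/
noncomputable def MFlinks (t : Tree V) (E F : Finset (Sym2 V)) : Finset (Sym2 V) :=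
  (F.filter (fun e => ∀ x ∈ e, t.IsLeaf x)) \ Wlinks t E

/-- `N = {bb' ∈ M : each of b, b' is unmatched by M_F}`. -/
noncomputable def Nlinks (t : Tree V) (E F M : Finset (Sym2 V)) : Finset (Sym2 V) :=
  M.filter (fun e => ∀ b ∈ e, ∀ f ∈ MFlinks t E F, b ∉ f)

/-- `J` : the set of links of `F` not incident to a locked leaf. -/
noncomputable def Jlinks (t : Tree V) (E F : Finset (Sym2 V)) : Finset (Sym2 V) :=
  F.filter (fun e => ∀ x ∈ e, ¬ IsLockedLeaf t E x)

/-- The lower bound `(3/2)|M| + |U| + (1/2)|N| + (1/2) Σ_{x ∈ X} d_J(x)`. -/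
noncomputable def LB (t : Tree V) (E F M : Finset (Sym2 V)) : ℚ :=
  (3 / 2 : ℚ) * (M.card : ℚ) + ((unmatchedLeaves t M).card : ℚ)
    + (1 / 2 : ℚ) * ((Nlinks t E F M).card : ℚ)
    + (1 / 2 : ℚ) * ∑ x ∈ Xset t E, (deg (Jlinks t E F) x : ℚ)

/-! ### Subtrees of `T/I`, semi-closed trees, credits -/

/-- `T'` (the rooted subtree of `T/I` with root `c`) is `M`-compatible. -/
def MCompatible (t : Tree V) (I M : Finset (Sym2 V)) (c : QT t I) : Prop :=
  ∀ e ∈ M, (∀ x ∈ e, inT t I c x) ∨ (∀ x ∈ e, ¬ inT t I c x)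

/-- `T'` is semi-closed (w.r.t. `M`): `M`-compatible and closed w.r.t. its unmatched leaves. -/
def SemiClosedQ (t : Tree V) (I E M : Finset (Sym2 V)) (c : QT t I) : Prop :=
  MCompatible t I M c ∧
  ∀ x y, s(x, y) ∈ E → inT t I c x → qleafRep t I x → ¬ matchedRep t I M x → inT t I c y

/-- `T'` is minimally semi-closed. -/
def MinSemiClosedQ (t : Tree V) (I E M : Finset (Sym2 V)) (c : QT t I) : Prop :=
  SemiClosedQ t I E M c ∧
  ∀ c' : QT t I, below t I c c' → c' ≠ c → ¬ SemiClosedQ t I E M c'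

/-- `I'` is an exact cover of `T'` : the set of edges of `T/I` covered by `I'` is exactly
the edge set of `T'`. -/
def IsExactCoverQ (t : Tree V) (I : Finset (Sym2 V)) (c : QT t I) (I' : Finset (Sym2 V)) : Prop :=
  ∀ w, w ≠ t.root → ¬ coveredBy t I w → (coveredBy t I' w ↔ inT t I c (t.parent w))

/-- `up(U')` : the set of up-links of the unmatched leaves of `T'`. -/
noncomputable def upOfQ (t : Tree V) (I E M : Finset (Sym2 V)) (c : QT t I) :
    Finset (Sym2 V) :=
  E.filter (fun e => ∃ a u, e = s(a, u) ∧ inT t I c a ∧ qleafRep t I a ∧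
    ¬ matchedRep t I M a ∧ qUpNode t I E a u)

/-- `M` is a matching on the leaves of `T/I`. -/
def IsLeafMatchingQ (t : Tree V) (I M : Finset (Sym2 V)) : Prop :=
  (∀ e ∈ M, ∃ a b, e = s(a, b) ∧ qleafRep t I a ∧ qleafRep t I b ∧ ¬ rel t I a b) ∧
  ∀ e ∈ M, ∀ f ∈ M, e ≠ f → ∀ x, x ∈ e → ∀ y, y ∈ f → ¬ rel t I x y

/-- `L' = L(T')` as a set of nodes of `T/I`. -/
noncomputable def LsetQ (t : Tree V) (I : Finset (Sym2 V)) (c : QT t I) : Finset (QT t I) :=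
  Finset.univ.filter (fun d => below t I c d ∧ qleafRep t I d.out)

/-- `U'` : the `M`-unmatched leaves of `T'`. -/
noncomputable def UsetQ (t : Tree V) (I M : Finset (Sym2 V)) (c : QT t I) : Finset (QT t I) :=
  Finset.univ.filter
    (fun d => below t I c d ∧ qleafRep t I d.out ∧ ¬ matchedRep t I M d.out)

/-- `C'` : the non-leaf compound nodes of `T'`. -/
noncomputable def CsetQ (t : Tree V) (I : Finset (Sym2 V)) (c : QT t I) : Finset (QT t I) :=
  Finset.univ.filter
    (fun d => below t I c d ∧ qcompoundRep t I d.out ∧ ¬ qleafRep t I d.out)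

/-- `M' = M(T')` : the links of `M` with both ends in `T'`. -/
noncomputable def MlinksQ (t : Tree V) (I M : Finset (Sym2 V)) (c : QT t I) :
    Finset (Sym2 V) :=
  M.filter (fun e => ∀ x ∈ e, inT t I c x)

/-- `S'` : the stems of `T'`. -/
noncomputable def SsetQ (t : Tree V) (I E : Finset (Sym2 V)) (c : QT t I) : Finset (QT t I) :=
  Finset.univ.filter (fun d => below t I c d ∧ qStem t I E d.out)

/-- `S'_1` : the stems of `T'` whose twin link lies in `F`. -/
noncomputable def S1setQ (t : Tree V) (I E F : Finset (Sym2 V)) (c : QT t I) :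
    Finset (QT t I) :=
  Finset.univ.filter (fun d => below t I c d ∧
    ∃ a b, qTwinAt t I E a b ∧ s(a, b) ∈ F ∧ qIsLCA t I d.out a b)

/-- `X'` : the original nodes of `T'` lying in `X`. -/
noncomputable def XsetQ (t : Tree V) (I E : Finset (Sym2 V)) (c : QT t I) : Finset (QT t I) :=
  Finset.univ.filter
    (fun d => below t I c d ∧ ¬ qcompoundRep t I d.out ∧ d.out ∈ Xset t E)

/-- `tickets(T') = |N(T')| + Σ_{x ∈ X'} d_J(x)`. -/
noncomputable def ticketsQ (t : Tree V) (I E F M : Finset (Sym2 V)) (c : QT t I) : ℕ :=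
  ((Nlinks t E F M).filter (fun e => ∀ x ∈ e, inT t I c x)).card
    + ∑ d ∈ XsetQ t I E c, deg (Jlinks t E F) d.out

/-- `coupons(T')` : one coupon for each unmatched leaf and each compound node of `T'`,
and `3/2` coupons for each link of `M(T')`. -/
noncomputable def couponsQ (t : Tree V) (I M : Finset (Sym2 V)) (c : QT t I) : ℚ :=
  ((Finset.univ.filter (fun d : QT t I => below t I c d ∧
      ((qleafRep t I d.out ∧ ¬ matchedRep t I M d.out) ∨ qcompoundRep t I d.out))).card : ℚ)
    + (3 / 2 : ℚ) * ((MlinksQ t I M c).card : ℚ)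

/-- `credit(T') = coupons(T') + tickets(T')/2`. -/
noncomputable def creditQ (t : Tree V) (I E F M : Finset (Sym2 V)) (c : QT t I) : ℚ :=
  couponsQ t I M c + (ticketsQ t I E F M c : ℚ) / 2

/-- `T'` is deficient: `credit(T') < |U'| + |M'| + 1`. -/
def DeficientQ (t : Tree V) (I E F M : Finset (Sym2 V)) (c : QT t I) : Prop :=
  creditQ t I E F M c < ((UsetQ t I M c).card : ℚ) + ((MlinksQ t I M c).card : ℚ) + 1

/-! ### Invariants and greedy steps -/

/-- Credit Invariant: the credit of every subtree of `T/I` is distributed as described: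
coupons on unmatched leaves, compound nodes and links of `M`, tickets on links of `N` and
original nodes of `X`. -/
def CreditInvariant (t : Tree V) (E F M I : Finset (Sym2 V)) : Prop :=
  F ⊆ E ∧ M ⊆ E ∧
  ∀ c : QT t I, creditQ t I E F M c = couponsQ t I M c + (ticketsQ t I E F M c : ℚ) / 2

/-- Degree in `T/I` : the number of links of `F` with exactly one end in the class of `x`. -/
noncomputable def qdegQ (t : Tree V) (I F : Finset (Sym2 V)) (x : V) : ℕ :=
  (F.filter (fun e => (∃ z, z ∈ e ∧ rel t I z x) ∧ ∃ z, z ∈ e ∧ ¬ rel t I z x)).card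

/-- Matching Invariant: `M` is a matching on the leaves of `T/I` and `d_F(b) = 1` for
every leaf `b` of `T/I` matched by `M`. -/
def MatchingInvariant (t : Tree V) (F M I : Finset (Sym2 V)) : Prop :=
  IsLeafMatchingQ t I M ∧ ∀ e ∈ M, ∀ b, b ∈ e → qdegQ t I F b = 1

/-- A greedy locking-tree contraction step. -/
def LockStep (t : Tree V) (E M : Finset (Sym2 V)) (I I₂ : Finset (Sym2 V)) : Prop :=
  ∃ a b b' v u,
    IsLockingTree t E a b b' v ∧
    (∀ e ∈ M, a ∉ e) ∧ (∀ e ∈ M, b ∉ e) ∧ (∀ e ∈ M, b' ∉ e) ∧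
    (∀ c c' v', IsLockingTree t E b c c' v' → t.desc v v') ∧
    IsUpLink t E a u ∧ I₂ = I ∪ {s(b, b'), s(a, u)}

/-- A greedy link contraction step: contract a link of `E` joining two `M`-unmatched
leaves of `T/I`. -/
def LinkStep (t : Tree V) (E M : Finset (Sym2 V)) (I I₂ : Finset (Sym2 V)) : Prop :=
  ∃ x y, s(x, y) ∈ E ∧ ¬ rel t I x y ∧ qleafRep t I x ∧ qleafRep t I y ∧
    ¬ matchedRep t I M x ∧ ¬ matchedRep t I M y ∧ I₂ = insert (s(x, y)) I

/-- Contraction of a semi-closed tree with an exact cover. -/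
def SemiStep (t : Tree V) (E M : Finset (Sym2 V)) (I I₂ : Finset (Sym2 V)) : Prop :=
  ∃ (c : QT t I) (I' : Finset (Sym2 V)), I' ⊆ E ∧ SemiClosedQ t I E M c ∧
    IsExactCoverQ t I c I' ∧ I₂ = I ∪ I'

/-- A sequence of greedy locking-tree contractions starting from the empty partial solution. -/
inductive LockPhase {V : Type} [Fintype V] [DecidableEq V]
    (t : Tree V) (E M : Finset (Sym2 V)) : Finset (Sym2 V) → Prop where
  | base : LockPhase t E M ∅
  | step {I I₂ : Finset (Sym2 V)} :
      LockPhase t E M I → LockStep t E M I I₂ → LockPhase t E M I₂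

/-- Partial Solution Invariant: `I` is obtained by first exhausting greedy locking-tree
contractions, and then sequentially applying greedy link contractions or contractions of
semi-closed trees with exact covers. -/
inductive PSI {V : Type} [Fintype V] [DecidableEq V]
    (t : Tree V) (E M : Finset (Sym2 V)) : Finset (Sym2 V) → Prop where
  | start {I : Finset (Sym2 V)} :
      LockPhase t E M I → (∀ I₂, ¬ LockStep t E M I I₂) → PSI t E M I
  | link {I I₂ : Finset (Sym2 V)} : PSI t E M I → LinkStep t E M I I₂ → PSI t E M I₂
  | semi {I I₂ : Finset (Sym2 V)} : PSI t E M I → SemiStep t E M I I₂ → PSI t E M I₂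

/-! ### Dangerous trees -/

/-- The witness structure of a 3-leaf dangerous tree: `a` is the unmatched leaf,
`b, b'` are the matched leaves, `ab' ∈ E`, the contraction of `ab'` does not create a new
leaf, and `T'` is `b`-open. -/
def Witness3 (t : Tree V) (I E M : Finset (Sym2 V)) (c : QT t I) (a b b' : V) : Prop :=
  inT t I c a ∧ inT t I c b ∧ inT t I c b' ∧
  qleafRep t I a ∧ qleafRep t I b ∧ qleafRep t I b' ∧
  ¬ rel t I a b ∧ ¬ rel t I a b' ∧ ¬ rel t I b b' ∧
  ¬ matchedRep t I M a ∧ matchedRep t I M b ∧ matchedRep t I M b' ∧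
  (∃ x y, s(x, y) ∈ E ∧ rel t I x a ∧ rel t I y b' ∧
    ¬ qleafRep t (insert (s(x, y)) I) x) ∧
  (∃ u, qUpNode t I E b u ∧ ¬ inT t I c u)

/-- A 3-leaf dangerous tree. -/
def Dangerous3 (t : Tree V) (I E M : Finset (Sym2 V)) (c : QT t I) : Prop :=
  SemiClosedQ t I E M c ∧ (CsetQ t I c).card = 0 ∧ (MlinksQ t I M c).card = 1 ∧
  (LsetQ t I c).card = 3 ∧ (SsetQ t I E c).card = 0 ∧
  ∃ a b b', Witness3 t I E M c a b b'

/-- A dangerous tree: a 3-leaf dangerous tree, or a 4-leaf tree with one stem, exactly one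
twin of which is matched, such that contracting the twin link yields a 3-leaf dangerous tree. -/
def Dangerous (t : Tree V) (I E M : Finset (Sym2 V)) (c : QT t I) : Prop :=
  Dangerous3 t I E M c ∨
  (SemiClosedQ t I E M c ∧ (CsetQ t I c).card = 0 ∧ (MlinksQ t I M c).card = 1 ∧
    (LsetQ t I c).card = 4 ∧ (SsetQ t I E c).card = 1 ∧
    ∃ a b, qTwinAt t I E a b ∧ inT t I c a ∧ inT t I c b ∧
      (matchedRep t I M a ↔ ¬ matchedRep t I M b) ∧
      Dangerous3 t (insert (s(a, b)) I) E M (qm t (insert (s(a, b)) I) c.out))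

/-! ### The switching construction -/

/-- `W̃` : for every 4-leaf minimally semi-closed (dangerous) tree of `T/I`, its twin link. -/
noncomputable def Wtil (t : Tree V) (I E M : Finset (Sym2 V)) : Finset (Sym2 V) :=
  E.filter (fun e => ∃ (a b : V) (c : QT t I), e = s(a, b) ∧ MinSemiClosedQ t I E M c ∧
    (LsetQ t I c).card = 4 ∧ qTwinAt t I E a b ∧ inT t I c a ∧ inT t I c b)

/-- The canonical ordering witness of a 3-leaf dangerous tree: if both orderings of the
matched leaves qualify, the up-node of `b` is an ancestor of the up-node of `b'`. -/
def Witness3Canon (t : Tree V) (I E M : Finset (Sym2 V)) (c : QT t I) (a b b' : V) : Prop :=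
  Witness3 t I E M c a b b' ∧
  (Witness3 t I E M c a b' b →
    ∃ u u', qUpNode t I E b u ∧ qUpNode t I E b' u' ∧ qdescRep t I u u')

/-- `M̃` is obtained from `M` by switching, in each (3-leaf dangerous) tree `D̃` of `T̃`
corresponding to a minimally semi-closed tree of `T/I`, the matching link `bb'` to `ab'`. -/
def SwitchedMatching (t : Tree V) (I E M Mt : Finset (Sym2 V)) : Prop :=
  ∀ e : Sym2 V, e ∈ Mt ↔
    ((e ∈ M ∧ ∀ c : QT t I, MinSemiClosedQ t I E M c →
        ∀ x, x ∈ e → ¬ inT t (I ∪ Wtil t I E M) (qm t (I ∪ Wtil t I E M) c.out) x) ∨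
     (∃ (c : QT t I) (a b b' x y : V), MinSemiClosedQ t I E M c ∧
        Witness3Canon t (I ∪ Wtil t I E M) E M (qm t (I ∪ Wtil t I E M) c.out) a b b' ∧
        e = s(x, y) ∧ e ∈ E ∧ rel t (I ∪ Wtil t I E M) x a ∧
        rel t (I ∪ Wtil t I E M) y b' ∧
        ¬ qleafRep t (insert e (I ∪ Wtil t I E M)) x))

/-! ### Auxiliary machinery for the proof -/
section Aux

set_option linter.unusedSectionVars false

variable (t : Tree V)

namespace Tree

lemma iterate_root (n : ℕ) : t.parent^[n] t.root = t.root := by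
  induction n with
  | zero => rfl
  | succ n ih => rw [Function.iterate_succ_apply', ih, t.parent_root]

lemma desc_refl (v : V) : t.desc v v := ⟨0, rfl⟩

lemma desc_trans {u v w : V} (h1 : t.desc u v) (h2 : t.desc v w) : t.desc u w := by
  obtain ⟨n, hn⟩ := h1; obtain ⟨m, hm⟩ := h2
  exact ⟨n + m, by rw [Function.iterate_add_apply, hm, hn]⟩

lemma desc_root (v : V) : t.desc t.root v := t.reach v

lemma desc_root_iff {w : V} : t.desc w t.root ↔ w = t.root := by
  constructor
  · rintro ⟨n, hn⟩; rw [iterate_root] at hn; exact hn.symm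
  · rintro rfl; exact t.desc_refl _

lemma IsLeaf.desc_eq' {a v : V} (ha : t.IsLeaf a) (h : t.desc a v) : v = a := by
  obtain ⟨n, hn⟩ := h
  have key : ∀ n v, t.parent^[n] v = a → v = a := by
    intro n
    induction n with
    | zero => exact fun v h => h
    | succ n ih =>
      intro v h
      rw [Function.iterate_succ_apply'] at h
      by_cases hv : t.parent^[n] v = a
      · exact ih v hv
      · exact absurd h (ha.2 _ hv)
  exact key n v hn

lemma _root_.TAP.Tree.IsLeaf.desc_eq {t' : Tree V} {a v : V} (ha : t'.IsLeaf a) (h : t'.desc a v) :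
    v = a := Tree.IsLeaf.desc_eq' t' ha h

lemma desc_comparable {w w' v : V} (h1 : t.desc w v) (h2 : t.desc w' v) :
    t.desc w w' ∨ t.desc w' w := by
  obtain ⟨n, hn⟩ := h1; obtain ⟨m, hm⟩ := h2
  rcases le_total n m with h | h
  · right
    refine ⟨m - n, ?_⟩
    rw [← hn, ← Function.iterate_add_apply, Nat.sub_add_cancel h, hm]
  · left
    refine ⟨n - m, ?_⟩
    rw [← hm, ← Function.iterate_add_apply, Nat.sub_add_cancel h, hn]

lemma depth_spec (v : V) : t.parent^[t.depth v] v = t.root :=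
  @Nat.find_spec (fun n => t.parent^[n] v = t.root) (Classical.decPred _) (t.reach v)

lemma depth_min {v : V} {N : ℕ} (h : t.parent^[N] v = t.root) : t.depth v ≤ N :=
  @Nat.find_min' (fun n => t.parent^[n] v = t.root) (Classical.decPred _) (t.reach v) N h

lemma desc_depth_le {w v : V} (h : t.desc w v) : t.depth w ≤ t.depth v := by
  obtain ⟨n, hn⟩ := h
  rcases le_total n (t.depth v) with hle | hle
  · have : t.parent^[t.depth v - n] w = t.root := by
      rw [← hn, ← Function.iterate_add_apply, Nat.sub_add_cancel hle, depth_spec]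
    exact le_trans (t.depth_min this) (Nat.sub_le _ _)
  · have : w = t.root := by
      rw [← hn, ← Nat.sub_add_cancel hle, Function.iterate_add_apply, depth_spec, iterate_root]
    rw [this]
    exact le_trans (t.depth_min (by rw [iterate_root])) (Nat.zero_le _)

lemma desc_depth_eq {w v : V} (h : t.desc w v) (hd : t.depth w = t.depth v) : w = v := by
  obtain ⟨n, hn⟩ := h
  rcases Nat.eq_zero_or_pos n with rfl | hpos
  · exact hn.symm
  rcases le_total n (t.depth v) with hle | hle
  · have h2 : t.parent^[t.depth v - n] w = t.root := by
      rw [← hn, ← Function.iterate_add_apply, Nat.sub_add_cancel hle, depth_spec]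
    have := t.depth_min h2
    omega
  · have hw : w = t.root := by
      rw [← hn, ← Nat.sub_add_cancel hle, Function.iterate_add_apply, depth_spec, iterate_root]
    have hdw : t.depth w = 0 := Nat.le_antisymm (by rw [hw]; exact t.depth_min (by rw [iterate_root])) (Nat.zero_le _)
    have hv0 : t.depth v = 0 := by omega
    have hv : v = t.root := by
      have h2 := t.depth_spec v
      rwa [hv0, Function.iterate_zero_apply] at h2
    rw [hw, hv]

lemma desc_antisymm {w v : V} (h1 : t.desc w v) (h2 : t.desc v w) : w = v :=
  t.desc_depth_eq h1 (Nat.le_antisymm (t.desc_depth_le h1) (t.desc_depth_le h2))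

lemma desc_root_eq {σ : V} (h : t.desc σ t.root) : σ = t.root := (desc_root_iff t).1 h

end Tree

end Aux

section Aux2

set_option linter.unusedSectionVars false

variable {t : Tree V}

namespace Tree

lemma exists_common_anc (t : Tree V) (a b : V) : ∃ i, t.desc (t.parent^[i] a) b :=
  ⟨t.depth a, by rw [t.depth_spec]; exact t.desc_root b⟩

noncomputable def lcaV (t : Tree V) (a b : V) : V :=
  t.parent^[@Nat.find _ (Classical.decPred _) (t.exists_common_anc a b)] a

lemma lcaV_isLCA (t : Tree V) (a b : V) : t.IsLCA (t.lcaV a b) a b := by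
  have i0 := @Nat.find _ (Classical.decPred _) (t.exists_common_anc a b)
  refine ⟨⟨_, rfl⟩, @Nat.find_spec _ (Classical.decPred _) (t.exists_common_anc a b), ?_⟩
  intro x hxa hxb
  obtain ⟨j, hj⟩ := hxa
  by_cases hle : @Nat.find _ (Classical.decPred _) (t.exists_common_anc a b) ≤ j
  · refine ⟨j - @Nat.find _ (Classical.decPred _) (t.exists_common_anc a b), ?_⟩
    rw [lcaV, ← Function.iterate_add_apply, Nat.sub_add_cancel hle, hj]
  · exfalso
    refine @Nat.find_min _ (Classical.decPred _) (t.exists_common_anc a b) j (by omega) ?_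
    rw [hj]; exact hxb

lemma onPath_symm {w u v : V} (h : t.onPath w u v) : t.onPath w v u := h.symm

end Tree

lemma covers_mk_iff {a b w : V} : covers t (s(a, b)) w ↔ t.onPath w a b := by
  constructor
  · rintro ⟨u, v, he, hp⟩
    rcases Sym2.eq_iff.1 he with ⟨rfl, rfl⟩ | ⟨rfl, rfl⟩
    · exact hp
    · exact hp.symm
  · intro h; exact ⟨a, b, rfl, h⟩

lemma coveredBy_singleton_iff {e : Sym2 V} {w : V} :
    coveredBy t {e} w ↔ covers t e w := by
  constructor
  · rintro ⟨f, hf, hc⟩; rw [Finset.mem_singleton] at hf; rwa [hf] at hc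
  · intro h; exact ⟨e, Finset.mem_singleton_self e, h⟩

/-- unpacking `rel` for a singleton contraction -/
lemma rel_singleton_iff {e : Sym2 V} {x y : V} :
    rel t {e} x y ↔ ∀ w, w ≠ t.root → t.onPath w x y → covers t e w := by
  unfold rel
  constructor
  · intro h w hw hp; exact coveredBy_singleton_iff.1 (h w hw hp)
  · intro h w hw hp; exact coveredBy_singleton_iff.2 (h w hw hp)

section TwinFacts

variable {c d σ : V} (htw : TwinPair t c d) (hσ : t.IsLCA σ c d)

include htw hσ

lemma stem_ne_root : σ ≠ t.root := by
  have h1 : ¬ rel t {s(c, d)} c t.root := htw.2.2.2.1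
  rw [rel_singleton_iff] at h1
  push_neg at h1
  obtain ⟨w, hwr, hp, hnc⟩ := h1
  have hwc : t.desc w c := by
    rcases hp with ⟨h1, _⟩ | ⟨h1, _⟩
    · exact h1
    · exact absurd (t.desc_root_eq h1) hwr
  have hwd : t.desc w d := by
    by_contra hwd
    exact hnc (covers_mk_iff.2 (Or.inl ⟨hwc, hwd⟩))
  intro hroot
  exact hwr (t.desc_root_eq (hroot ▸ hσ.2.2 w hwc hwd))

lemma twin_rel_under : ∀ x, t.desc σ x → rel t {s(c, d)} x c := by
  have key : ∀ n x, t.parent^[n] x = σ → rel t {s(c, d)} x c := by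
    intro n
    induction n with
    | zero =>
      intro x hx
      simp only [Function.iterate_zero_apply] at hx
      subst hx
      rw [rel_singleton_iff]
      intro w hw hp
      rcases hp with ⟨h1, h2⟩ | ⟨h1, h2⟩
      · exact absurd (t.desc_trans h1 hσ.1) h2
      · exact covers_mk_iff.2 (Or.inl ⟨h1, fun hd => h2 (hσ.2.2 w h1 hd)⟩)
    | succ n ih =>
      intro x hx
      rw [Function.iterate_succ_apply] at hx
      exact htw.2.2.2.2 x (ih _ hx)
  rintro x ⟨n, hn⟩
  exact key n x hn

lemma twin_inside_covered : ∀ w, t.desc σ w → w ≠ σ → w ≠ t.root ∧ t.onPath w c d := by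
  intro w hσw hwσ
  have hwr : w ≠ t.root := by
    rintro rfl
    exact stem_ne_root htw hσ (t.desc_root_eq hσw)
  refine ⟨hwr, ?_⟩
  by_cases hc : t.desc w c
  · refine Or.inl ⟨hc, fun hd => hwσ (t.desc_antisymm ?_ hσw)⟩
    exact hσ.2.2 w hc hd
  · have hrel := twin_rel_under htw hσ w hσw
    rw [rel_singleton_iff] at hrel
    have := hrel w hwr (Or.inl ⟨t.desc_refl w, hc⟩)
    exact covers_mk_iff.1 this

lemma stem_not_leaf : ¬ t.IsLeaf σ := by
  intro hl
  have hc : c = σ := hl.desc_eq hσ.1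
  have hd : d = σ := hl.desc_eq hσ.2.1
  exact htw.2.2.1 (hc.trans hd.symm)

lemma twin_leaves_under : ∀ x, t.IsLeaf x → t.desc σ x → x = c ∨ x = d := by
  intro x hx hdx
  by_cases hxσ : x = σ
  · exact absurd (hxσ ▸ hx) (stem_not_leaf htw hσ)
  · rcases (twin_inside_covered htw hσ x hdx hxσ).2 with ⟨h1, _⟩ | ⟨h1, _⟩
    · exact Or.inl (hx.desc_eq h1).symm
    · exact Or.inr (hx.desc_eq h1).symm

lemma twin_c_ne_stem : c ≠ σ := fun h => stem_not_leaf htw hσ (h ▸ htw.1)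

lemma twin_d_ne_stem : d ≠ σ := fun h => stem_not_leaf htw hσ (h ▸ htw.2.1)

end TwinFacts

end Aux2

section Aux3

set_option linter.unusedSectionVars false

variable {t : Tree V} {F : Finset (Sym2 V)}

lemma leaf_link_mem {f : Sym2 V} {a : V} (ha : t.IsLeaf a) (hc : covers t f a) : a ∈ f := by
  obtain ⟨u, v, rfl, hp⟩ := hc
  rcases hp with ⟨h1, _⟩ | ⟨h1, _⟩
  · rw [Sym2.mem_iff]; exact Or.inl (ha.desc_eq h1).symm
  · rw [Sym2.mem_iff]; exact Or.inr (ha.desc_eq h1).symm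

lemma exists_leaf_link (hcov : IsCover t F) {a : V} (ha : t.IsLeaf a) :
    ∃ f ∈ F, a ∈ f := by
  obtain ⟨f, hf, hc⟩ := hcov a ha.1
  exact ⟨f, hf, leaf_link_mem ha hc⟩

lemma deg_one_aux (hnd' : ∀ e ∈ F, ¬ e.IsDiag) (hSM : ShadowsMinimal t F)
    {a b b' : V} (ha : t.IsLeaf a) (hf : s(a, b) ∈ F) (hg : s(a, b') ∈ F)
    (hne : s(a, b) ≠ s(a, b'))
    (hcc' : t.desc (t.lcaV a b') (t.lcaV a b)) : False := by
  set c := t.lcaV a b with hcdef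
  set c' := t.lcaV a b' with hc'def
  have hc := t.lcaV_isLCA a b
  have hc' := t.lcaV_isLCA a b'
  rw [← hcdef] at hc
  rw [← hc'def] at hc'
  have hba : b ≠ a := by
    intro h
    exact hnd' _ hf (by rw [h]; exact Sym2.mk_isDiag_iff.2 rfl)
  have hca : c ≠ a := by
    intro h
    exact hba (ha.desc_eq (h ▸ hc.2.1))
  have hproper : ProperShadow t (s(c, b)) (s(a, b)) := by
    constructor
    · intro w hw
      rw [covers_mk_iff] at hw ⊢
      rcases hw with ⟨h1, h2⟩ | ⟨h1, h2⟩
      · exact Or.inl ⟨t.desc_trans h1 hc.1, h2⟩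
      · exact Or.inr ⟨h1, fun hwa => h2 (hc.2.2 w hwa h1)⟩
    · refine ⟨a, covers_mk_iff.2 (Or.inl ⟨t.desc_refl a, fun h => hba (ha.desc_eq h)⟩), ?_⟩
      intro h
      rcases covers_mk_iff.1 h with ⟨h1, _⟩ | ⟨h1, _⟩
      · exact hca (ha.desc_eq h1)
      · exact hba (ha.desc_eq h1)
  have hcover : IsCover t (insert (s(c, b)) (F.erase (s(a, b)))) := by
    intro w hw
    obtain ⟨g, hgF, hgc⟩ := hSM.1 w hw
    by_cases hgab : g = s(a, b)
    · subst hgab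
      rcases covers_mk_iff.1 hgc with ⟨h1, h2⟩ | ⟨h1, h2⟩
      · refine ⟨s(a, b'), Finset.mem_insert_of_mem (Finset.mem_erase.2 ⟨fun h => hne h.symm, hg⟩), ?_⟩
        refine covers_mk_iff.2 (Or.inl ⟨h1, fun hwb' => h2 ?_⟩)
        exact t.desc_trans (t.desc_trans (hc'.2.2 w h1 hwb') hcc') hc.2.1
      · refine ⟨s(c, b), Finset.mem_insert_self _ _, ?_⟩
        exact covers_mk_iff.2 (Or.inr ⟨h1, fun hwc => h2 (t.desc_trans hwc hc.1)⟩)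
    · exact ⟨g, Finset.mem_insert_of_mem (Finset.mem_erase.2 ⟨hgab, hgF⟩), hgc⟩
  exact hSM.2.2 _ hf _ hproper hcover

lemma leaf_deg_unique (hnd' : ∀ e ∈ F, ¬ e.IsDiag) (hSM : ShadowsMinimal t F)
    {a : V} (ha : t.IsLeaf a) {f g : Sym2 V} (hf : f ∈ F) (hg : g ∈ F)
    (haf : a ∈ f) (hag : a ∈ g) : f = g := by
  by_contra hne
  have hbf := Sym2.other_spec haf
  have hbg := Sym2.other_spec hag
  rw [← hbf] at hf
  rw [← hbg] at hg
  have hne' : s(a, Sym2.Mem.other haf) ≠ s(a, Sym2.Mem.other hag) := by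
    rw [hbf, hbg]; exact hne
  have h1 := (t.lcaV_isLCA a (Sym2.Mem.other haf)).1
  have h2 := (t.lcaV_isLCA a (Sym2.Mem.other hag)).1
  rcases t.desc_comparable h1 h2 with h | h
  · exact deg_one_aux hnd' hSM ha hg hf hne'.symm h
  · exact deg_one_aux hnd' hSM ha hf hg hne' h

end Aux3

section Aux4

set_option linter.unusedSectionVars false

variable {t : Tree V} {F : Finset (Sym2 V)}

lemma twin_stem_witness (hSM : ShadowsMinimal t F) {c d σ : V}
    (htw : TwinPair t c d) (hσ : t.IsLCA σ c d) (hcd : s(c, d) ∈ F) :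
    ∃ f ∈ F, σ ∈ f ∧ covers t f σ := by
  have hσr : σ ≠ t.root := stem_ne_root htw hσ
  obtain ⟨f, hfF, hfc⟩ := hSM.1 σ hσr
  refine ⟨f, hfF, ?_, hfc⟩
  obtain ⟨u, v, hfe, hp⟩ := hfc
  have claim : ∀ u v : V, f = s(u, v) → t.desc σ u → ¬ t.desc σ v → σ ∈ f := by
    intro u v hfe hσu hσv
    by_cases huσ : u = σ
    · rw [hfe, huσ, Sym2.mem_iff]; exact Or.inl rfl
    exfalso
    have hef : s(c, d) ≠ f := by
      intro h
      rw [hfe] at h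
      rcases Sym2.eq_iff.1 h with ⟨rfl, rfl⟩ | ⟨rfl, rfl⟩
      · exact hσv hσ.2.1
      · exact hσv hσ.1
    have hproper : ProperShadow t (s(σ, v)) f := by
      constructor
      · intro w hw
        rw [covers_mk_iff] at hw
        rw [hfe, covers_mk_iff]
        rcases hw with ⟨h1, h2⟩ | ⟨h1, h2⟩
        · exact Or.inl ⟨t.desc_trans h1 hσu, h2⟩
        · refine Or.inr ⟨h1, fun hwu => ?_⟩
          rcases t.desc_comparable hwu hσu with h | h
          · exact h2 h
          · exact hσv (t.desc_trans h h1)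
      · refine ⟨u, ?_, ?_⟩
        · rw [hfe]
          exact covers_mk_iff.2 (Or.inl ⟨t.desc_refl u, fun huv => hσv (t.desc_trans hσu huv)⟩)
        · intro h
          rcases covers_mk_iff.1 h with ⟨h1, _⟩ | ⟨h1, _⟩
          · exact huσ (t.desc_antisymm h1 hσu)
          · exact hσv (t.desc_trans hσu h1)
    have hcover : IsCover t (insert (s(σ, v)) (F.erase f)) := by
      intro w hw
      obtain ⟨g, hgF, hgc⟩ := hSM.1 w hw
      by_cases hgf : g = f
      · rw [hgf, hfe] at hgc
        rcases covers_mk_iff.1 hgc with ⟨h1, h2⟩ | ⟨h1, h2⟩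
        · by_cases hwσ : t.desc w σ
          · exact ⟨s(σ, v), Finset.mem_insert_self _ _, covers_mk_iff.2 (Or.inl ⟨hwσ, h2⟩)⟩
          · have hσw : t.desc σ w := by
              rcases t.desc_comparable h1 hσu with h | h
              · exact absurd h hwσ
              · exact h
            have hwne : w ≠ σ := fun h => hwσ (h ▸ t.desc_refl σ)
            obtain ⟨_, hpath⟩ := twin_inside_covered htw hσ w hσw hwne
            exact ⟨s(c, d), Finset.mem_insert_of_mem (Finset.mem_erase.2 ⟨hef, hcd⟩),
              covers_mk_iff.2 hpath⟩
        · refine ⟨s(σ, v), Finset.mem_insert_self _ _, ?_⟩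
          exact covers_mk_iff.2 (Or.inr ⟨h1, fun hwσ => h2 (t.desc_trans hwσ hσu)⟩)
      · exact ⟨g, Finset.mem_insert_of_mem (Finset.mem_erase.2 ⟨hgf, hgF⟩), hgc⟩
    exact hSM.2.2 f hfF _ hproper hcover
  rcases hp with ⟨h1, h2⟩ | ⟨h1, h2⟩
  · exact claim u v hfe h1 h2
  · exact claim v u (hfe.trans (Sym2.eq_swap)) h1 h2

end Aux4

section Aux5

set_option linter.unusedSectionVars false

variable {t : Tree V} {E F : Finset (Sym2 V)}

lemma locksAt_mem {a b b' v : V} (hL : LocksAt t E b b' a v) :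
    ∀ x, (t.IsLeaf x ∧ t.desc v x) ↔ (x = a ∨ x = b ∨ x = b') := by
  intro x
  have := Set.ext_iff.1 hL.2.2.2.2.1 x
  simpa using this

lemma lock_link_analysis (hnd : ∀ e ∈ E, ¬ e.IsDiag) (hsh : ShadowClosed t E)
    (hFE : F ⊆ E) (hSM : ShadowsMinimal t F) {a b b' v : V}
    (hL : LocksAt t E b b' a v) (he : s(b, b') ∈ F) :
    ∃ z f, f ∈ F ∧ f = s(a, z) ∧ ¬ t.IsLeaf z ∧ t.desc v z := by
  have hmem := locksAt_mem hL
  have ha_leaf : t.IsLeaf a := ((hmem a).2 (Or.inl rfl)).1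
  have hb_leaf : t.IsLeaf b := ((hmem b).2 (Or.inr (Or.inl rfl))).1
  have hb'_leaf : t.IsLeaf b' := ((hmem b').2 (Or.inr (Or.inr rfl))).1
  have hva : t.desc v a := ((hmem a).2 (Or.inl rfl)).2
  obtain ⟨f, hf, haf⟩ := exists_leaf_link hSM.1 ha_leaf
  have hfz := Sym2.other_spec haf
  set z := Sym2.Mem.other haf with hzdef
  have hza : z ≠ a := Sym2.other_ne (hnd f (hFE hf)) haf
  set c0 := t.lcaV a z with hc0def
  have hc0 := t.lcaV_isLCA a z
  rw [← hc0def] at hc0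
  have hc0a : c0 ≠ a := fun h => hza (ha_leaf.desc_eq (h ▸ hc0.2.1))
  have hshadow : s(a, c0) ∈ E := by
    refine hsh f (hFE hf) _ (fun h => hc0a (Sym2.mk_isDiag_iff.1 h).symm) ?_
    intro w hw
    rw [← hfz, covers_mk_iff]
    rcases covers_mk_iff.1 hw with ⟨h1, h2⟩ | ⟨h1, h2⟩
    · exact Or.inl ⟨h1, fun hwz => h2 (hc0.2.2 w h1 hwz)⟩
    · exact absurd (t.desc_trans h1 hc0.1) h2
  have hzE : s(a, z) ∈ E := by rw [hfz]; exact hFE hf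
  have hPne : z ∈ Finset.univ.filter (fun x => s(a, x) ∈ E) :=
    Finset.mem_filter.2 ⟨Finset.mem_univ _, hzE⟩
  obtain ⟨u, huP, humin⟩ :=
    (Finset.univ.filter (fun x => s(a, x) ∈ E)).exists_min_image t.depth ⟨z, hPne⟩
  have hup : IsUpLink t E a u :=
    ⟨(Finset.mem_filter.1 huP).2, fun x hx => humin x (Finset.mem_filter.2 ⟨Finset.mem_univ _, hx⟩)⟩
  have hvu : t.desc v u := hL.2.2.2.2.2.2.2 u hup
  have hd1 : t.depth v ≤ t.depth u := t.desc_depth_le hvu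
  have hd2 : t.depth u ≤ t.depth c0 :=
    humin c0 (Finset.mem_filter.2 ⟨Finset.mem_univ _, hshadow⟩)
  have hvz : t.desc v z := by
    rcases t.desc_comparable hva hc0.1 with h | h
    · exact t.desc_trans h hc0.2.1
    · have : c0 = v :=
        t.desc_depth_eq h (Nat.le_antisymm (t.desc_depth_le h) (le_trans hd1 hd2))
      exact t.desc_trans (this ▸ t.desc_refl v) hc0.2.1
  have hzleaf : ¬ t.IsLeaf z := by
    intro hz
    have htwab : a ≠ b := hL.2.2.2.2.2.1.2.2.1
    have hb'ne : b' ≠ a := hL.2.2.2.1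
    rcases (hmem z).1 ⟨hz, hvz⟩ with h | h | h
    · exact hza h
    · -- z = b : two F-links at leaf b
      have hfb : b ∈ f := by rw [← hfz, ← h, Sym2.mem_iff]; exact Or.inr rfl
      have hfe : f = s(b, b') := leaf_deg_unique (fun e heF => hnd e (hFE heF)) hSM hb_leaf
        hf he hfb (Sym2.mem_iff.2 (Or.inl rfl))
      have : s(a, b) = s(b, b') := by rw [← hfe, ← hfz, h]
      rcases Sym2.eq_iff.1 this with ⟨h1, _⟩ | ⟨h1, _⟩
      · exact htwab h1
      · exact hb'ne h1.symm
    · -- z = b'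
      have hfb : b' ∈ f := by rw [← hfz, ← h, Sym2.mem_iff]; exact Or.inr rfl
      have hfe : f = s(b, b') := leaf_deg_unique (fun e heF => hnd e (hFE heF)) hSM hb'_leaf
        hf he hfb (Sym2.mem_iff.2 (Or.inr rfl))
      have : s(a, b') = s(b, b') := by rw [← hfe, ← hfz, h]
      rcases Sym2.eq_iff.1 this with ⟨h1, _⟩ | ⟨h1, _⟩
      · exact htwab h1
      · exact hb'ne h1.symm
  exact ⟨z, f, hf, hfz.symm, hzleaf, hvz⟩

lemma twin_partner_unique {a b b2 : V} (h1 : TwinPair t a b) (h2 : TwinPair t a b2) :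
    b = b2 := by
  have aux : ∀ b b2 : V, TwinPair t a b → TwinPair t a b2 →
      t.desc (t.lcaV a b2) (t.lcaV a b) → b = b2 := by
    intro b b2 h1 h2 hdesc
    have hlb : t.desc (t.lcaV a b2) b := t.desc_trans hdesc (t.lcaV_isLCA a b).2.1
    rcases twin_leaves_under h2 (t.lcaV_isLCA a b2) b h1.2.1 hlb with h | h
    · exact absurd h.symm h1.2.2.1
    · exact h
  rcases t.desc_comparable (t.lcaV_isLCA a b).1 (t.lcaV_isLCA a b2).1 with h | h
  · exact (aux b2 b h2 h1 h).symm
  · exact aux b b2 h1 h2 h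

end Aux5

section Aux6

set_option linter.unusedSectionVars false

variable {t : Tree V}

lemma sym2_exists_mem (e : Sym2 V) : ∃ x, x ∈ e := by
  induction e using Sym2.ind with
  | _ x y => exact ⟨x, Sym2.mem_iff.2 (Or.inl rfl)⟩

lemma card_filter_mem_eq_two {e : Sym2 V} (h : ¬ e.IsDiag) :
    (Finset.univ.filter (fun x => x ∈ e)).card = 2 := by
  induction e using Sym2.ind with
  | _ x y =>
    have hxy : x ≠ y := fun hh => h (Sym2.mk_isDiag_iff.2 hh)
    have hset : Finset.univ.filter (fun z => z ∈ s(x, y)) = {x, y} := by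
      ext z
      simp [Sym2.mem_iff]
    rw [hset, Finset.card_pair hxy]

lemma card_leaf_filter_le_one {e : Sym2 V} (hP : ¬ ∀ x ∈ e, t.IsLeaf x) :
    ((Finset.univ.filter t.IsLeaf).filter (fun x => x ∈ e)).card ≤ 1 := by
  induction e using Sym2.ind with
  | _ x y =>
    push_neg at hP
    obtain ⟨x0, hx0e, hx0⟩ := hP
    rw [Finset.card_le_one]
    intro a ha b hb
    rw [Finset.mem_filter, Finset.mem_filter] at ha hb
    by_contra hab
    have hall : ∀ u, u ∈ s(x, y) → t.IsLeaf u := by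
      intro u hu
      rcases Sym2.mem_iff.1 hu with rfl | rfl <;>
      rcases Sym2.mem_iff.1 ha.2 with rfl | rfl <;>
      rcases Sym2.mem_iff.1 hb.2 with rfl | rfl <;>
      first
        | exact ha.1.2
        | exact hb.1.2
        | exact absurd rfl hab
    exact hx0 (hall x0 hx0e)

lemma sum_deg_swap (s : Finset V) (G : Finset (Sym2 V)) :
    ∑ x ∈ s, (G.filter (fun e => x ∈ e)).card = ∑ e ∈ G, (s.filter (fun x => x ∈ e)).card := by
  simp only [Finset.card_filter]
  exact Finset.sum_comm

lemma card_incidence (s : Finset V) (G : Finset (Sym2 V)) :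
    ((s ×ˢ G).filter (fun p => p.1 ∈ p.2)).card = ∑ x ∈ s, (G.filter (fun e => x ∈ e)).card := by
  rw [Finset.card_filter, Finset.sum_product]
  simp only [Finset.card_filter]

end Aux6

/-- the lower bound
`(3/2)|F| ≥ (3/2)|M| + |U| + (1/2)|N| + (1/2) Σ_{x ∈ X} d_J(x)`. -/
theorem lower_bound (t : Tree V) (E F M : Finset (Sym2 V))
    (hnd : ∀ e ∈ E, ¬ e.IsDiag) (hsh : ShadowClosed t E) (hF : IsGoodCover t E F)
    (hM : IsMaxLeafMatching t E M) :
    (3 / 2 : ℚ) * (F.card : ℚ) ≥ LB t E F M := by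
  obtain ⟨hFE, hSM, _, _⟩ := hF
  obtain ⟨hMsub, hMmatch, hMmax⟩ := hM
  have hndF : ∀ e ∈ F, ¬ e.IsDiag := fun e he => hnd e (hFE he)
  have huniq : ∀ {a : V} {f g : Sym2 V}, t.IsLeaf a → f ∈ F → g ∈ F → a ∈ f → a ∈ g → f = g :=
    fun ha hf hg haf hag => leaf_deg_unique hndF hSM ha hf hg haf hag
  set LF := Finset.univ.filter t.IsLeaf with hLFdef
  set FLL := F.filter (fun e => ∀ x ∈ e, t.IsLeaf x) with hFLLdef
  set W := Wlinks t E with hWdef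
  set S := stems t E with hSdef
  set X := Xset t E with hXdef
  set J := Jlinks t E F with hJdef
  set N := Nlinks t E F M with hNdef
  set U := unmatchedLeaves t M with hUdef
  set MF := MFlinks t E F with hMFdef
  set WF := FLL ∩ W with hWFdef
  have hJF : J ⊆ F := Finset.filter_subset _ _
  -- degree sums
  have h2F : ∑ x : V, (F.filter (fun e => x ∈ e)).card = 2 * F.card := by
    rw [sum_deg_swap]
    rw [Finset.sum_congr rfl (fun e he => card_filter_mem_eq_two (hndF e he))]
    simp [Finset.sum_const, Nat.mul_comm]
  -- leaf degrees are one
  have hLdeg : ∀ a ∈ LF, (F.filter (fun e => a ∈ e)).card = 1 := by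
    intro a ha
    have hal : t.IsLeaf a := (Finset.mem_filter.1 ha).2
    obtain ⟨f, hf, haf⟩ := exists_leaf_link hSM.1 hal
    rw [Finset.card_eq_one]
    refine ⟨f, ?_⟩
    ext g
    rw [Finset.mem_filter, Finset.mem_singleton]
    constructor
    · rintro ⟨hgF, hag⟩; exact huniq hal hgF hf hag haf
    · rintro rfl; exact ⟨hf, haf⟩
  have hsumL : ∑ x ∈ LF, (F.filter (fun e => x ∈ e)).card = LF.card := by
    rw [Finset.sum_congr rfl hLdeg]
    simp
  -- partition of the vertex set
  have hdisjLS : Disjoint LF S := by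
    rw [Finset.disjoint_left]
    intro x hx hxs
    obtain ⟨a, b, htw, _, hlca⟩ := (Finset.mem_filter.1 hxs).2
    exact stem_not_leaf htw hlca (Finset.mem_filter.1 hx).2
  have hdisjLSX : Disjoint (LF ∪ S) X := by
    rw [Finset.disjoint_left]
    intro x hx hxX
    obtain ⟨hx1, hx2⟩ := (Finset.mem_filter.1 hxX).2
    rcases Finset.mem_union.1 hx with h | h
    · exact hx1 (Finset.mem_filter.1 h).2
    · exact hx2 (Finset.mem_filter.1 h).2
  have huniv : LF ∪ S ∪ X = Finset.univ := by
    ext x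
    simp only [Finset.mem_union, Finset.mem_filter, Finset.mem_univ, true_and, iff_true,
      hLFdef, hSdef, hXdef, stems, Xset]
    by_cases h1 : t.IsLeaf x
    · exact Or.inl (Or.inl (by simp [h1]))
    by_cases h2 : IsStem t E x
    · exact Or.inl (Or.inr (by simp [h2]))
    · exact Or.inr (by simp [h1, h2])
  have hpart : ∑ x : V, (F.filter (fun e => x ∈ e)).card
      = (∑ x ∈ LF, (F.filter (fun e => x ∈ e)).card)
      + (∑ x ∈ S, (F.filter (fun e => x ∈ e)).card)
      + (∑ x ∈ X, (F.filter (fun e => x ∈ e)).card) := by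
    rw [← huniv, Finset.sum_union hdisjLSX, Finset.sum_union hdisjLS]
  -- split X degrees by J
  have hXsplit : ∀ x : V, (F.filter (fun e => x ∈ e)).card
      = (J.filter (fun e => x ∈ e)).card + ((F \ J).filter (fun e => x ∈ e)).card := by
    intro x
    rw [← Finset.card_union_of_disjoint
      (Finset.disjoint_filter_filter Finset.disjoint_sdiff), ← Finset.filter_union,
      Finset.union_sdiff_of_subset hJF]
  have hXsum : ∑ x ∈ X, (F.filter (fun e => x ∈ e)).card
      = (∑ x ∈ X, (J.filter (fun e => x ∈ e)).card)
      + (∑ x ∈ X, ((F \ J).filter (fun e => x ∈ e)).card) := by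
    rw [← Finset.sum_add_distrib]
    exact Finset.sum_congr rfl fun x _ => hXsplit x
  -- |L| <= |F| + |FLL|
  have hlle : LF.card ≤ F.card + FLL.card := by
    calc LF.card = ∑ x ∈ LF, (F.filter (fun e => x ∈ e)).card := hsumL.symm
      _ = ∑ e ∈ F, (LF.filter (fun x => x ∈ e)).card := sum_deg_swap LF F
      _ ≤ ∑ e ∈ F, (1 + if (∀ x ∈ e, t.IsLeaf x) then 1 else 0) := by
          refine Finset.sum_le_sum fun e he => ?_
          by_cases hP : ∀ x ∈ e, t.IsLeaf x
          · rw [if_pos hP]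
            have hsub : LF.filter (fun x => x ∈ e) ⊆ Finset.univ.filter (fun x => x ∈ e) := by
              intro z hz
              exact Finset.mem_filter.2 ⟨Finset.mem_univ _, (Finset.mem_filter.1 hz).2⟩
            calc (LF.filter (fun x => x ∈ e)).card
                ≤ (Finset.univ.filter (fun x => x ∈ e)).card := Finset.card_le_card hsub
              _ = 2 := card_filter_mem_eq_two (hndF e he)
          · rw [if_neg hP]
            exact card_leaf_filter_le_one hP
      _ = F.card + FLL.card := by
          rw [Finset.sum_add_distrib, Finset.sum_const, smul_eq_mul, mul_one]
          congr 1
          rw [hFLLdef]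
          exact (Finset.card_filter _ _).symm
  -- |FLL| = |MF| + |WF|
  have hFLLsplit : MF.card + WF.card = FLL.card := by
    rw [hMFdef, hWFdef]
    exact Finset.card_sdiff_add_card_inter FLL W
  -- matching bound : |MF| + |N| <= |M|
  have hmatchbound : MF.card + N.card ≤ M.card := by
    have hMFleaf : ∀ e ∈ MF, ∀ x ∈ e, t.IsLeaf x := by
      intro e he
      exact (Finset.mem_filter.1 (Finset.mem_sdiff.1 he).1).2
    have hMFF : ∀ e ∈ MF, e ∈ F := fun e he =>
      (Finset.mem_filter.1 (Finset.mem_sdiff.1 he).1).1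
    have hNM : N ⊆ M := Finset.filter_subset _ _
    have hdisj : Disjoint MF N := by
      rw [Finset.disjoint_right]
      intro e heN heMF
      obtain ⟨x, hx⟩ := sym2_exists_mem e
      exact (Finset.mem_filter.1 heN).2 x hx e heMF hx
    have hsub : MF ∪ N ⊆ leafLinks t E \ W := by
      intro e he
      rcases Finset.mem_union.1 he with h | h
      · refine Finset.mem_sdiff.2 ⟨?_, (Finset.mem_sdiff.1 h).2⟩
        exact Finset.mem_filter.2 ⟨hFE (hMFF e h), hMFleaf e h⟩
      · exact hMsub (hNM h)
    have hmatch : IsMatching (MF ∪ N) := by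
      constructor
      · intro e he
        rcases Finset.mem_union.1 he with h | h
        · exact hndF e (hMFF e h)
        · exact hMmatch.1 e (hNM h)
      · intro e he f hf hne x hxe
        rcases Finset.mem_union.1 he with he' | he' <;> rcases Finset.mem_union.1 hf with hf' | hf'
        · intro hxf
          exact hne (huniq (hMFleaf e he' x hxe) (hMFF e he') (hMFF f hf') hxe hxf)
        · intro hxf
          exact (Finset.mem_filter.1 hf').2 x hxf e he' hxe
        · exact fun hxf => (Finset.mem_filter.1 he').2 x hxe f hf' hxf
        · exact hMmatch.2 e (hNM he') f (hNM hf') hne x hxe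
    have := hMmax (MF ∪ N) hsub hmatch
    rwa [Finset.card_union_of_disjoint hdisj] at this
  -- the injection : |WF| <= sum_S deg F + sum_X deg (F\J)
  have hWFsub : WF ⊆ F := fun e he =>
    Finset.filter_subset _ _ ((Finset.mem_inter.1 he).1)
  have hinj : WF.card ≤ (∑ x ∈ S, (F.filter (fun e => x ∈ e)).card)
      + (∑ x ∈ X, ((F \ J).filter (fun e => x ∈ e)).card) := by
    set I1 := (S ×ˢ F).filter (fun p => p.1 ∈ p.2) with hI1def
    set I2 := (X ×ˢ (F \ J)).filter (fun p => p.1 ∈ p.2) with hI2def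
    rcases WF.eq_empty_or_nonempty with hWFe | ⟨e0, he0⟩
    · rw [hWFe, Finset.card_empty]; exact Nat.zero_le _
    obtain ⟨x0, _⟩ := sym2_exists_mem e0
    set R : Sym2 V → V × Sym2 V → Prop := fun e p =>
      p.2 ∈ F ∧ p.1 ∈ p.2 ∧
      ((∃ c d, e = s(c, d) ∧ TwinPair t c d ∧ t.IsLCA p.1 c d ∧ covers t p.2 p.1) ∨
       (¬ IsTwinLinkE t e ∧ ∃ a b b' v, e = s(b, b') ∧ LocksAt t E b b' a v ∧
          p.2 = s(a, p.1) ∧ ¬ t.IsLeaf p.1 ∧ t.desc v p.1)) with hRdef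
    have hex : ∀ e ∈ WF, ∃ p, R e p := by
      intro e he
      have heF : e ∈ F := hWFsub he
      have heW := (Finset.mem_inter.1 he).2
      have heE : e ∈ E := Finset.filter_subset _ _ heW
      have hWor : IsTwinLinkE t e ∨ IsLockingLink t E e := (Finset.mem_filter.1 heW).2
      by_cases htwin : IsTwinLinkE t e
      · obtain ⟨c, d, hecd, htw⟩ := htwin
        have hσ := t.lcaV_isLCA c d
        obtain ⟨f, hfF, hσf, hcov⟩ := twin_stem_witness hSM htw hσ (hecd ▸ heF)
        exact ⟨(t.lcaV c d, f), hfF, hσf, Or.inl ⟨c, d, hecd, htw, hσ, hcov⟩⟩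
      · obtain ⟨b, b', a, hebb, hLocks⟩ := hWor.resolve_left htwin
        obtain ⟨v, hLA⟩ := hLocks
        obtain ⟨z, f, hfF, hfz, hnl, hvz⟩ :=
          lock_link_analysis hnd hsh hFE hSM hLA (hebb ▸ heF)
        refine ⟨(z, f), hfF, ?_, Or.inr ⟨htwin, a, b, b', v, hebb, hLA, hfz, hnl, hvz⟩⟩
        rw [hfz, Sym2.mem_iff]; exact Or.inr rfl
    obtain ⟨φ, hφ⟩ : ∃ φ : Sym2 V → V × Sym2 V, ∀ e ∈ WF, R e (φ e) := by
      refine ⟨fun e => if h : ∃ p, R e p then h.choose else (x0, e0), fun e he => ?_⟩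
      have hh := hex e he
      simp only [dif_pos hh]
      exact hh.choose_spec
    have hmaps : ∀ e ∈ WF, φ e ∈ I1 ∪ I2 := by
      intro e he
      obtain ⟨hp2F, hp1mem, hbranch⟩ := hφ e he
      rcases hbranch with ⟨c, d, hecd, htw, hσ, _⟩ | ⟨hnt, a, b, b', v, hebb, hLA, hp2, hnl, _⟩
      · refine Finset.mem_union_left _ (Finset.mem_filter.2 ⟨Finset.mem_product.2 ⟨?_, hp2F⟩, hp1mem⟩)
        refine Finset.mem_filter.2 ⟨Finset.mem_univ _, c, d, htw, ?_, hσ⟩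
        rw [← hecd]
        exact Finset.filter_subset _ _ ((Finset.mem_inter.1 he).2)
      · by_cases hstem : IsStem t E (φ e).1
        · exact Finset.mem_union_left _ (Finset.mem_filter.2
            ⟨Finset.mem_product.2 ⟨Finset.mem_filter.2 ⟨Finset.mem_univ _, hstem⟩, hp2F⟩, hp1mem⟩)
        · refine Finset.mem_union_right _ (Finset.mem_filter.2
            ⟨Finset.mem_product.2 ⟨?_, ?_⟩, hp1mem⟩)
          · exact Finset.mem_filter.2 ⟨Finset.mem_univ _, hnl, hstem⟩
          · refine Finset.mem_sdiff.2 ⟨hp2F, fun hJ2 => ?_⟩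
            refine (Finset.mem_filter.1 hJ2).2 a ?_ ⟨b, b', v, hLA⟩
            rw [hp2, Sym2.mem_iff]; exact Or.inl rfl
    have hinjOn : Set.InjOn φ WF := by
      intro e he e' he' heq
      have hR1 := hφ e he
      have hR2 := hφ e' he'
      rw [heq] at hR1
      obtain ⟨hp2F, hp1mem, hb1⟩ := hR1
      obtain ⟨_, _, hb2⟩ := hR2
      have cross : ∀ (e1 e2 : Sym2 V), e1 ∈ F → e2 ∈ F →
          (∃ c d, e1 = s(c, d) ∧ TwinPair t c d ∧ t.IsLCA (φ e').1 c d ∧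
            covers t (φ e').2 (φ e').1) →
          (∃ a b b' v, e2 = s(b, b') ∧ LocksAt t E b b' a v ∧
            (φ e').2 = s(a, (φ e').1) ∧ ¬ t.IsLeaf (φ e').1 ∧ t.desc v (φ e').1) →
          e1 = e2 := by
        rintro e1 e2 _ _ ⟨c, d, he1, htw, hσ, hcov⟩ ⟨a, b, b', v, he2, hLA, hp2, hnl, hdes⟩
        have hmem := locksAt_mem hLA
        have hnda : ¬ t.desc (φ e').1 a := by
          rw [hp2] at hcov
          rcases covers_mk_iff.1 hcov with ⟨_, h2⟩ | ⟨_, h2⟩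
          · exact absurd (t.desc_refl _) h2
          · exact h2
        have hc : c = b ∨ c = b' := by
          rcases (hmem c).1 ⟨htw.1, t.desc_trans hdes hσ.1⟩ with h | h | h
          · exact absurd (h ▸ hσ.1) hnda
          · exact Or.inl h
          · exact Or.inr h
        have hd : d = b ∨ d = b' := by
          rcases (hmem d).1 ⟨htw.2.1, t.desc_trans hdes hσ.2.1⟩ with h | h | h
          · exact absurd (h ▸ hσ.2.1) hnda
          · exact Or.inl h
          · exact Or.inr h
        have hcd : c ≠ d := htw.2.2.1
        rw [he1, he2]
        rcases hc with rfl | rfl <;> rcases hd with rfl | rfl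
        · exact absurd rfl hcd
        · rfl
        · exact Sym2.eq_swap
        · exact absurd rfl hcd
      rcases hb1 with ⟨c, d, he1, htw, hσ, hcov⟩ | ⟨hnt, a, b, b', v, he1, hLA, hp2, hnl, hdes⟩
      · rcases hb2 with ⟨c', d', he2, htw', hσ', _⟩ | ⟨_, a, b, b', v, he2, hLA, hp2, hnl, hdes⟩
        · -- twin-twin
          have hc' : c' = c ∨ c' = d := twin_leaves_under htw hσ c' htw'.1 hσ'.1
          have hd' : d' = c ∨ d' = d := twin_leaves_under htw hσ d' htw'.2.1 hσ'.2.1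
          have hcd' : c' ≠ d' := htw'.2.2.1
          rw [he1, he2]
          rcases hc' with rfl | rfl <;> rcases hd' with rfl | rfl
          · exact absurd rfl hcd'
          · rfl
          · exact Sym2.eq_swap
          · exact absurd rfl hcd'
        · exact cross e e' (hWFsub he) (hWFsub he') ⟨c, d, he1, htw, hσ, hcov⟩
            ⟨a, b, b', v, he2, hLA, hp2, hnl, hdes⟩
      · rcases hb2 with ⟨c, d, he2, htw, hσ, hcov⟩ | ⟨_, a2, b2, b2', v2, he2, hLA2, hp2', hnl2, _⟩
        · exact (cross e' e (hWFsub he') (hWFsub he) ⟨c, d, he2, htw, hσ, hcov⟩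
            ⟨a, b, b', v, he1, hLA, hp2, hnl, hdes⟩).symm
        · -- lock-lock
          have haa2 : a = a2 := by
            have h := hp2.symm.trans hp2'
            rcases Sym2.eq_iff.1 h with ⟨h1, _⟩ | ⟨h1, h2⟩
            · exact h1
            · exact absurd (h1 ▸ ((locksAt_mem hLA a).2 (Or.inl rfl)).1) hnl
          have hbb2 : b = b2 := by
            refine twin_partner_unique hLA.2.2.2.2.2.1 ?_
            rw [haa2]
            exact hLA2.2.2.2.2.2.1
          have hbleaf : t.IsLeaf b := ((locksAt_mem hLA b).2 (Or.inr (Or.inl rfl))).1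
          refine huniq hbleaf (hWFsub he) (hWFsub he') ?_ ?_
          · rw [he1, Sym2.mem_iff]; exact Or.inl rfl
          · rw [he2, ← hbb2, Sym2.mem_iff]; exact Or.inl rfl
    calc WF.card ≤ (I1 ∪ I2).card :=
        Finset.card_le_card_of_injOn φ hmaps hinjOn
      _ ≤ I1.card + I2.card := Finset.card_union_le _ _
      _ = _ := by rw [hI1def, hI2def, card_incidence, card_incidence]
  -- |LF| = 2|M| + |U|
  have hLFcard : LF.card = 2 * M.card + U.card := by
    have hMleaf : ∀ e ∈ M, ∀ x ∈ e, t.IsLeaf x := fun e he =>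
      (Finset.mem_filter.1 (Finset.mem_sdiff.1 (hMsub he)).1).2
    set matched := Finset.univ.filter (fun a => ∃ e ∈ M, a ∈ e) with hmdef
    have hunion : LF = U ∪ matched := by
      ext a
      simp only [hLFdef, hUdef, unmatchedLeaves, hmdef, Finset.mem_union, Finset.mem_filter,
        Finset.mem_univ, true_and]
      constructor
      · intro hal
        by_cases hexm : ∃ e ∈ M, a ∈ e
        · exact Or.inr hexm
        · push_neg at hexm
          exact Or.inl ⟨hal, hexm⟩
      · rintro (⟨hal, _⟩ | ⟨e, he, hae⟩)
        · exact hal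
        · exact hMleaf e he a hae
    have hdisjUM : Disjoint U matched := by
      rw [Finset.disjoint_left]
      intro a ha ham
      obtain ⟨e, he, hae⟩ := (Finset.mem_filter.1 ham).2
      exact (Finset.mem_filter.1 ha).2.2 e he hae
    have hmcard : matched.card = 2 * M.card := by
      have hbi : matched = M.biUnion (fun e => Finset.univ.filter (fun x => x ∈ e)) := by
        ext a
        simp [hmdef]
      rw [hbi, Finset.card_biUnion, Finset.sum_congr rfl
        (fun e he => card_filter_mem_eq_two (hMmatch.1 e he))]
      · simp [Finset.sum_const, Nat.mul_comm]
      · intro e he f hf hne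
        rw [Function.onFun, Finset.disjoint_left]
        intro x hx hx'
        exact hMmatch.2 e he f hf hne x (Finset.mem_filter.1 hx).2 (Finset.mem_filter.1 hx').2
    rw [hunion, Finset.card_union_of_disjoint hdisjUM, hmcard]
    omega
  -- final arithmetic (ℕ)
  have key : 3 * M.card + 2 * U.card + N.card + (∑ x ∈ X, (J.filter (fun e => x ∈ e)).card)
      ≤ 3 * F.card := by omega
  -- cast to ℚ
  rw [ge_iff_le, LB]
  have hcast : ((∑ x ∈ X, (J.filter (fun e => x ∈ e)).card : ℕ) : ℚ)
      = ∑ x ∈ X, ((deg J x : ℚ)) := by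
    rw [Nat.cast_sum]
    rfl
  have hq : ((3 * M.card + 2 * U.card + N.card
      + (∑ x ∈ X, (J.filter (fun e => x ∈ e)).card) : ℕ) : ℚ) ≤ ((3 * F.card : ℕ) : ℚ) :=
    Nat.cast_le.2 key
  push_cast at hq
  simp only [deg]
  push_cast
  linarith [hq]

end TAP
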